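/- In the constant-marginal-cost posted-price model, let V^{pp} := {(CS_G(r), Π_G(r)) : G a Borel probability measure on [0,1], r ∈ R*(G)}, let A := Q̄·(1−M), and define f(0) := 0 and f(π) := π·ln(A/π) for π ∈ (0,A]. Then: (i) V^{pp} = {(c,π) ∈ ℝ₊² : 0 ≤ π ≤ A and 0 ≤ c ≤ f(π)}; (ii) V^{pp} is compact and convex; (iii) the Pareto frontier of V^{pp} (points of V^{pp} not dominated by any other point of V^{pp} coordinatewise with at least one strict inequality) coincides with its supported frontier (points maximizing k·c + (1−k)·π over V^{pp} for some k ∈ [0,1]) and equals {(f(π), π) : π ∈ [A/e, A]}. -/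

import Mathlib

open MeasureTheory Set Filter

namespace PostedPrice

/-- `G` is a Borel probability measure on `[0,1]`. -/
def ProbOn01 (G : Measure ℝ) : Prop :=
  IsProbabilityMeasure G ∧ G (Set.Icc 0 1) = 1

/-- Survival function `S_G(v) = G([v,1])`. -/
noncomputable def SG (G : Measure ℝ) (v : ℝ) : ℝ := (G (Set.Icc v 1)).toReal

/-- Seller profit from posting cutoff price `r`: `Π_G(r) = Q̄·(r−M)·S_G(r)`. -/
noncomputable def PiG (Qbar M : ℝ) (G : Measure ℝ) (r : ℝ) : ℝ :=
  Qbar * (r - M) * SG G r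

/-- Consumer surplus from cutoff price `r`: `CS_G(r) = Q̄·∫_r^1 S_G(v) dv`. -/
noncomputable def CSG (Qbar : ℝ) (G : Measure ℝ) (r : ℝ) : ℝ :=
  Qbar * ∫ v in r..1, SG G v

/-- The seller-optimal posted-price cutoffs `R*(G)`. -/
def Rstar (M : ℝ) (G : Measure ℝ) : Set ℝ :=
  {r ∈ Set.Icc M 1 | ∀ r' ∈ Set.Icc M 1, (r' - M) * SG G r' ≤ (r - M) * SG G r}

/-- Weighted objective `J_k(G,r)`. -/
noncomputable def Jpp (Qbar M k : ℝ) (G : Measure ℝ) (r : ℝ) : ℝ :=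
  k * CSG Qbar G r + (1 - k) * PiG Qbar M G r

/-- Optimal value of the upstream problem, `V_k^{pp}`. -/
noncomputable def Vpp (Qbar M k : ℝ) : ℝ :=
  sSup {x | ∃ G : Measure ℝ, ProbOn01 G ∧ ∃ r ∈ Rstar M G, x = Jpp Qbar M k G r}

/-- `r_k = M + (1−M)·e^{−(2k−1)/k}`. -/
noncomputable def rkFun (M k : ℝ) : ℝ := M + (1 - M) * Real.exp (-(2*k - 1)/k)

/-- CDF of the optimal market composition `G_k` for `k ∈ (1/2,1]`. -/
noncomputable def GkCDF (M k v : ℝ) : ℝ :=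
  if v < rkFun M k then 0
  else if v < 1 then 1 - (rkFun M k - M) / (v - M)
  else 1


/-- The set of implementable seller-optimal posted-price pairs `(CS, Π)`. -/
def VppSet (Qbar M : ℝ) : Set (ℝ × ℝ) :=
  {p | ∃ G : Measure ℝ, ProbOn01 G ∧ ∃ r ∈ Rstar M G, p = (CSG Qbar G r, PiG Qbar M G r)}

/-- The boundary function `f(π) = π·ln(A/π)` (with `f(0) = 0`). -/
noncomputable def fBoundary (A pi : ℝ) : ℝ :=
  if pi = 0 then 0 else pi * Real.log (A / pi)

/-- Pareto frontier of a set of (consumer surplus, profit) pairs. -/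
def ParetoFrontier (V : Set (ℝ × ℝ)) : Set (ℝ × ℝ) :=
  {p ∈ V | ¬ ∃ p' ∈ V, p.1 ≤ p'.1 ∧ p.2 ≤ p'.2 ∧ (p.1 < p'.1 ∨ p.2 < p'.2)}

/-- Supported frontier: points maximizing `k·c + (1−k)·π` over `V` for some `k ∈ [0,1]`. -/
def SupportedFrontier (V : Set (ℝ × ℝ)) : Set (ℝ × ℝ) :=
  {p ∈ V | ∃ k ∈ Set.Icc (0:ℝ) 1,
    ∀ p' ∈ V, k * p'.1 + (1 - k) * p'.2 ≤ k * p.1 + (1 - k) * p.2}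


-- ===== auxiliary development =====

-- ==================== auxiliary lemmas ====================

lemma SG_nonneg (G : Measure ℝ) (v : ℝ) : 0 ≤ SG G v := ENNReal.toReal_nonneg

lemma SG_le_one (G : Measure ℝ) [IsProbabilityMeasure G] (v : ℝ) : SG G v ≤ 1 := by
  have h : G (Set.Icc v 1) ≤ 1 := prob_le_one
  calc (G (Set.Icc v 1)).toReal ≤ (1 : ENNReal).toReal :=
        ENNReal.toReal_mono (by simp) h
    _ = 1 := by simp

lemma SG_anti (G : Measure ℝ) [IsFiniteMeasure G] : Antitone (SG G) := by
  intro u v huv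
  exact ENNReal.toReal_mono (measure_ne_top G _)
    (measure_mono (Set.Icc_subset_Icc_left huv))

lemma integral_div_sub (p M r : ℝ) (hrM : 0 < r - M) (hr1 : r ≤ 1) :
    ∫ v in r..1, p / (v - M) = p * Real.log ((1 - M) / (r - M)) := by
  have h1M : 0 < 1 - M := by linarith
  have hrw : ∀ v : ℝ, p / (v - M) = p * (fun u : ℝ => u⁻¹) (v - M) := fun v => div_eq_mul_inv _ _
  simp_rw [hrw]
  rw [intervalIntegral.integral_const_mul,
    intervalIntegral.integral_comp_sub_right (fun u : ℝ => u⁻¹) M,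
    integral_inv (notMem_uIcc_of_lt hrM h1M)]

/-- subset direction of (i) -/
lemma vpp_mem_bounds (Qbar M : ℝ) (hQbar : 0 < Qbar) (hM : M ∈ Set.Ico (0:ℝ) 1)
    (G : Measure ℝ) (hG : ProbOn01 G) (r : ℝ) (hr : r ∈ Rstar M G) :
    0 ≤ PiG Qbar M G r ∧ PiG Qbar M G r ≤ Qbar * (1 - M) ∧
      0 ≤ CSG Qbar G r ∧ CSG Qbar G r ≤ fBoundary (Qbar * (1 - M)) (PiG Qbar M G r) := by
  obtain ⟨hprob, -⟩ := hG
  haveI := hprob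
  obtain ⟨⟨hMr, hr1⟩, hopt⟩ := hr
  have hM1 : M < 1 := hM.2
  have hM0 : 0 ≤ M := hM.1
  have hS0 : 0 ≤ SG G r := SG_nonneg G r
  have hS1 : SG G r ≤ 1 := SG_le_one G r
  set p : ℝ := (r - M) * SG G r with hp_def
  have hp0 : 0 ≤ p := mul_nonneg (by linarith) hS0
  have hPi : PiG Qbar M G r = Qbar * p := by rw [PiG, hp_def]; ring
  have hPi0 : 0 ≤ PiG Qbar M G r := by rw [hPi]; positivity
  have hPiA : PiG Qbar M G r ≤ Qbar * (1 - M) := by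
    rw [hPi]
    have : p ≤ 1 - M := by
      calc p ≤ (r - M) * 1 := by
              apply mul_le_mul_of_nonneg_left hS1 (by linarith)
        _ ≤ 1 - M := by linarith
    nlinarith
  have hCS0 : 0 ≤ CSG Qbar G r := by
    rw [CSG]
    have h0 : (0:ℝ) ≤ ∫ v in r..1, SG G v :=
      intervalIntegral.integral_nonneg hr1 (fun u _ => SG_nonneg G u)
    positivity
  refine ⟨hPi0, hPiA, hCS0, ?_⟩
  rcases eq_or_lt_of_le hp0 with hp | hp
  · -- p = 0
    have hSzero : ∀ v ∈ Set.Ioc r 1, SG G v = 0 := by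
      intro v hv
      have hvM : M < v := lt_of_le_of_lt hMr hv.1
      have := hopt v ⟨le_of_lt hvM, hv.2⟩
      have h1 : (v - M) * SG G v ≤ 0 := by rw [← hp] at this; exact this
      nlinarith [SG_nonneg G v]
    have hint : ∫ v in r..1, SG G v = 0 := by
      rw [intervalIntegral.integral_congr_ae (g := fun _ => (0:ℝ))]
      · simp
      · filter_upwards with x hx
        rw [Set.uIoc_of_le hr1] at hx
        exact hSzero x hx
    have hPi0' : PiG Qbar M G r = 0 := by rw [hPi, ← hp]; ring
    rw [CSG, hint, hPi0', fBoundary]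
    simp
  · -- p > 0
    have hrM : 0 < r - M := by
      rcases (lt_or_ge 0 (r - M)) with h | h
      · exact h
      · exfalso; nlinarith
    have hSr : 0 < SG G r := by nlinarith
    have hpr : p ≤ r - M := by nlinarith
    have h1M : 0 < 1 - M := by linarith
    have hr1M : r - M ≤ 1 - M := by linarith
    -- bound the integral
    have hmono : ∫ v in r..1, SG G v ≤ ∫ v in r..1, p / (v - M) := by
      apply intervalIntegral.integral_mono_on hr1
      · exact ((SG_anti G).antitoneOn _).intervalIntegrable
      · apply ContinuousOn.intervalIntegrable
        apply ContinuousOn.div continuousOn_const (by fun_prop)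
        intro x hx
        rw [Set.uIcc_of_le hr1] at hx
        have : r ≤ x := hx.1
        intro h0
        nlinarith
      · intro x hx
        have hxM : 0 < x - M := by have := hx.1; linarith
        rw [le_div_iff₀ hxM]
        have := hopt x ⟨by linarith [hx.1], hx.2⟩
        rw [mul_comm]
        exact this
    have hval : ∫ v in r..1, p / (v - M) = p * Real.log ((1 - M) / (r - M)) :=
      integral_div_sub p M r hrM hr1
    have hlog : Real.log ((1 - M) / (r - M)) ≤ Real.log ((1 - M) / p) := by
      apply Real.log_le_log (by positivity)
      exact div_le_div_of_nonneg_left (by linarith) hp hpr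
    have hfB : fBoundary (Qbar * (1 - M)) (PiG Qbar M G r)
        = Qbar * p * Real.log ((1 - M) / p) := by
      rw [hPi, fBoundary, if_neg (ne_of_gt (by positivity))]
      congr 1
      rw [mul_div_mul_left _ _ (ne_of_gt hQbar)]
    have key : ∫ v in r..1, SG G v ≤ p * Real.log ((1 - M) / p) := by
      refine hmono.trans ?_
      rw [hval]
      exact mul_le_mul_of_nonneg_left hlog hp0
    rw [CSG, hfB, mul_assoc]
    exact mul_le_mul_of_nonneg_left key (le_of_lt hQbar)

/-- Construction of the unit-elasticity (truncated Pareto) market. -/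
lemma construct (M p r : ℝ) (hM : M ∈ Set.Ico (0:ℝ) 1)
    (hp : 0 < p) (hpr : p ≤ r - M) (hr1 : r ≤ 1) :
    ∃ G : Measure ℝ, ProbOn01 G ∧ r ∈ Rstar M G ∧ SG G r = p / (r - M) ∧
      ∀ Qbar : ℝ, CSG Qbar G r = Qbar * (p * Real.log ((1 - M) / (r - M))) := by
  have hM0 : 0 ≤ M := hM.1
  have hM1 : M < 1 := hM.2
  have h1M : 0 < 1 - M := by linarith
  have hrM : 0 < r - M := lt_of_lt_of_le hp hpr
  have hMr : M < r := by linarith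
  set a : ℝ := p / (1 - M) with ha_def
  set b : ℝ := p / (r - M) with hb_def
  have ha : 0 < a := by positivity
  have hb : 0 < b := by positivity
  have hab : a ≤ b := by
    apply div_le_div_of_nonneg_left hp.le hrM
    linarith
  have hb1 : b ≤ 1 := by rw [hb_def, div_le_one hrM]; exact hpr
  have ha1 : a ≤ 1 := hab.trans hb1
  have hpa : p / a = 1 - M := by rw [ha_def]; field_simp
  have hpb : p / b = r - M := by rw [hb_def]; field_simp
  set h : ℝ → ℝ := fun u => if u < a then 1 else if u < b then M + p / u else M with hh_def
  have hmeas : Measurable h := by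
    apply Measurable.ite measurableSet_Iio measurable_const
    exact Measurable.ite measurableSet_Iio
      (measurable_const.add (measurable_const.div measurable_id)) measurable_const
  set G : Measure ℝ := Measure.map h (volume.restrict (Set.Ioc (0:ℝ) 1)) with hG_def
  have hGapp : ∀ s : Set ℝ, MeasurableSet s → G s = volume (h ⁻¹' s ∩ Set.Ioc 0 1) := by
    intro s hs
    rw [hG_def, Measure.map_apply hmeas hs, Measure.restrict_apply (hmeas hs)]
  -- range of h on (0,1]
  have hrange : ∀ u : ℝ, 0 < u → h u ∈ Set.Icc 0 1 := by
    intro u hu0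
    rw [hh_def]
    simp only
    split_ifs with h1 h2
    · exact ⟨zero_le_one, le_refl 1⟩
    · push_neg at h1
      constructor
      · have : 0 < p / u := by positivity
        linarith
      · have hple : p / u ≤ p / a := div_le_div_of_nonneg_left hp.le ha h1
        rw [hpa] at hple
        linarith
    · exact ⟨hM0, hM1.le⟩
  -- the survival function
  have Sval : ∀ v : ℝ, M < v → v ≤ 1 → SG G v = min b (p / (v - M)) := by
    intro v hv1 hv2
    have hvM : 0 < v - M := by linarith
    set w : ℝ := p / (v - M) with hw_def
    have hw : 0 < w := by positivity
    have haw : a ≤ w := by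
      apply div_le_div_of_nonneg_left hp.le hvM
      linarith
    have hpw : p / w = v - M := by rw [hw_def]; field_simp
    rw [SG, hGapp _ measurableSet_Icc]
    rcases le_or_gt b w with hbw | hwb
    · -- answer b, set is Ioo 0 b
      have hset : h ⁻¹' Set.Icc v 1 ∩ Set.Ioc 0 1 = Set.Ioo 0 b := by
        ext u
        simp only [Set.mem_inter_iff, Set.mem_preimage, Set.mem_Icc, Set.mem_Ioc, Set.mem_Ioo]
        constructor
        · rintro ⟨⟨huv, -⟩, hu0, hu1⟩
          refine ⟨hu0, ?_⟩
          by_contra hub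
          push_neg at hub
          have : h u = M := by
            rw [hh_def]; simp only
            rw [if_neg (by push_neg; linarith), if_neg (by push_neg; linarith)]
          rw [this] at huv; linarith
        · rintro ⟨hu0, hub⟩
          refine ⟨?_, hu0, by linarith⟩
          rw [hh_def]; simp only
          rcases lt_or_ge u a with h1 | h1
          · rw [if_pos h1]; exact ⟨hv2, le_refl 1⟩
          · rw [if_neg (not_lt.mpr h1), if_pos hub]
            constructor
            · have h3 : u ≤ w := by linarith
              have : p / w ≤ p / u := div_le_div_of_nonneg_left hp.le hu0 h3
              rw [hpw] at this
              linarith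
            · have hple : p / u ≤ p / a := div_le_div_of_nonneg_left hp.le ha h1
              rw [hpa] at hple
              linarith
      rw [hset, Real.volume_Ioo, min_eq_left hbw]
      simp [ENNReal.toReal_ofReal hb.le]
    · -- answer w, set is Ioc 0 w
      have hset : h ⁻¹' Set.Icc v 1 ∩ Set.Ioc 0 1 = Set.Ioc 0 w := by
        ext u
        simp only [Set.mem_inter_iff, Set.mem_preimage, Set.mem_Icc, Set.mem_Ioc]
        constructor
        · rintro ⟨⟨huv, -⟩, hu0, hu1⟩
          refine ⟨hu0, ?_⟩
          rw [hh_def] at huv; simp only at huv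
          split_ifs at huv with h1 h2
          · linarith
          · -- a ≤ u < b, v ≤ M + p/u
            have h3 : v - M ≤ p / u := by linarith
            have h4 : (v - M) * u ≤ p := by
              rw [← le_div_iff₀ hu0]; exact h3
            rw [hw_def, le_div_iff₀ hvM]
            nlinarith [h4]
          · linarith
        · rintro ⟨hu0, huw⟩
          have hub : u < b := lt_of_le_of_lt huw hwb
          refine ⟨?_, hu0, by linarith⟩
          rw [hh_def]; simp only
          rcases lt_or_ge u a with h1 | h1
          · rw [if_pos h1]; exact ⟨hv2, le_refl 1⟩
          · rw [if_neg (not_lt.mpr h1), if_pos hub]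
            constructor
            · have : p / w ≤ p / u := div_le_div_of_nonneg_left hp.le hu0 huw
              rw [hpw] at this
              linarith
            · have hple : p / u ≤ p / a := div_le_div_of_nonneg_left hp.le ha h1
              rw [hpa] at hple
              linarith
      rw [hset, Real.volume_Ioc, min_eq_right hwb.le]
      simp [ENNReal.toReal_ofReal hw.le]
  -- probability measure on [0,1]
  have hIoc01 : ∀ s : Set ℝ, (Set.Icc 0 1 ⊆ s) → h ⁻¹' s ∩ Set.Ioc 0 1 = Set.Ioc 0 1 := by
    intro s hs
    apply Set.inter_eq_right.mpr
    intro u hu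
    exact hs (hrange u hu.1)
  have hprob : ProbOn01 G := by
    constructor
    · constructor
      rw [hGapp _ MeasurableSet.univ, hIoc01 _ (Set.subset_univ _), Real.volume_Ioc]
      norm_num
    · rw [hGapp _ measurableSet_Icc, hIoc01 _ (le_refl _), Real.volume_Ioc]
      norm_num
  -- r is optimal
  have hSr : SG G r = b := by
    rw [Sval r hMr hr1, ← hb_def, min_self]
  have hrb : (r - M) * b = p := by rw [hb_def]; field_simp
  have hropt : r ∈ Rstar M G := by
    refine ⟨⟨hMr.le, hr1⟩, ?_⟩
    intro r' hr'
    rw [hSr, hrb]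
    rcases eq_or_lt_of_le hr'.1 with he | hlt
    · rw [← he]; simp [hp.le]
    · rw [Sval r' hlt hr'.2]
      have h1 : (r' - M) * min b (p / (r' - M)) ≤ (r' - M) * (p / (r' - M)) :=
        mul_le_mul_of_nonneg_left (min_le_right _ _) (by linarith)
      have hne : r' - M ≠ 0 := ne_of_gt (by linarith)
      have h2 : (r' - M) * (p / (r' - M)) = p := by
        rw [mul_comm]; exact div_mul_cancel₀ p hne
      linarith
  refine ⟨G, hprob, hropt, by rw [hSr, hb_def], ?_⟩
  intro Qbar
  rw [CSG]
  congr 1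
  rw [← integral_div_sub p M r hrM hr1]
  apply intervalIntegral.integral_congr_ae
  filter_upwards with v hv
  rw [Set.uIoc_of_le hr1] at hv
  have hv1 : M < v := hMr.trans hv.1
  rw [Sval v hv1 hv.2, min_eq_right]
  apply div_le_div_of_nonneg_left hp.le hrM
  linarith [hv.1]

lemma fB_zero (A : ℝ) : fBoundary A 0 = 0 := if_pos rfl

lemma fB_of_ne {A x : ℝ} (hx : x ≠ 0) : fBoundary A x = x * Real.log (A / x) := if_neg hx

lemma fB_nonneg {A : ℝ} (hA : 0 < A) {x : ℝ} (h0 : 0 ≤ x) (hxA : x ≤ A) :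
    0 ≤ fBoundary A x := by
  rcases eq_or_lt_of_le h0 with h | h
  · rw [← h, fB_zero]
  · rw [fB_of_ne (ne_of_gt h)]
    have h1 : 1 ≤ A / x := (one_le_div h).mpr hxA
    exact mul_nonneg h.le (Real.log_nonneg h1)

lemma fB_tangent_lt {A : ℝ} (hA : 0 < A) {y x : ℝ} (hy : 0 < y) (hx : 0 ≤ x) (hne : x ≠ y) :
    fBoundary A x < fBoundary A y + (Real.log (A / y) - 1) * (x - y) := by
  rcases eq_or_lt_of_le hx with h | h
  · rw [← h, fB_zero, fB_of_ne (ne_of_gt hy), Real.log_div (ne_of_gt hA) (ne_of_gt hy)]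
    nlinarith [hy]
  · rw [fB_of_ne (ne_of_gt h), fB_of_ne (ne_of_gt hy),
      Real.log_div (ne_of_gt hA) (ne_of_gt h), Real.log_div (ne_of_gt hA) (ne_of_gt hy)]
    have hyx : 0 < y / x := by positivity
    have hne1 : y / x ≠ 1 := by
      intro hcon
      apply hne
      field_simp at hcon
      linarith
    have key : Real.log (y / x) < y / x - 1 := Real.log_lt_sub_one_of_pos hyx hne1
    rw [Real.log_div (ne_of_gt hy) (ne_of_gt h)] at key
    have h2 : x * (y / x - 1) = y - x := by field_simp
    have key2 : x * (Real.log y - Real.log x) < y - x := by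
      have := (mul_lt_mul_iff_right₀ h).mpr key
      rwa [h2] at this
    nlinarith [key2]

lemma fB_tangent_le {A : ℝ} (hA : 0 < A) {y x : ℝ} (hy : 0 < y) (hx : 0 ≤ x) :
    fBoundary A x ≤ fBoundary A y + (Real.log (A / y) - 1) * (x - y) := by
  rcases eq_or_ne x y with h | h
  · rw [h]; ring_nf; exact le_refl _
  · exact (fB_tangent_lt hA hy hx h).le

lemma fB_at_peak {A : ℝ} (hA : 0 < A) :
    fBoundary A (A / Real.exp 1) = A / Real.exp 1 := by
  have he : (0:ℝ) < A / Real.exp 1 := by positivity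
  rw [fB_of_ne (ne_of_gt he)]
  have h1 : A / (A / Real.exp 1) = Real.exp 1 := by
    field_simp
  rw [h1, Real.log_exp, mul_one]

lemma fB_peak_slope {A : ℝ} (hA : 0 < A) :
    Real.log (A / (A / Real.exp 1)) - 1 = 0 := by
  have h1 : A / (A / Real.exp 1) = Real.exp 1 := by field_simp
  rw [h1, Real.log_exp]; ring

lemma fB_le_peak {A : ℝ} (hA : 0 < A) {x : ℝ} (h0 : 0 ≤ x) :
    fBoundary A x ≤ A / Real.exp 1 := by
  have he : (0:ℝ) < A / Real.exp 1 := by positivity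
  have := fB_tangent_le hA he h0
  rw [fB_at_peak hA, fB_peak_slope hA] at this
  linarith

lemma fB_lt_peak {A : ℝ} (hA : 0 < A) {x : ℝ} (h0 : 0 ≤ x) (hne : x ≠ A / Real.exp 1) :
    fBoundary A x < A / Real.exp 1 := by
  have he : (0:ℝ) < A / Real.exp 1 := by positivity
  have := fB_tangent_lt hA he h0 hne
  rw [fB_at_peak hA, fB_peak_slope hA] at this
  linarith

lemma fB_strict_anti {A : ℝ} (hA : 0 < A) {x y : ℝ} (hx : A / Real.exp 1 ≤ x)
    (hxy : x < y) (hyA : y ≤ A) : fBoundary A y < fBoundary A x := by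
  have he : (0:ℝ) < A / Real.exp 1 := by positivity
  have hx0 : 0 < x := lt_of_lt_of_le he hx
  have htan := fB_tangent_lt hA hx0 (by linarith : (0:ℝ) ≤ y) (ne_of_gt hxy)
  have hAx : A ≤ x * Real.exp 1 := by
    rw [div_le_iff₀ (Real.exp_pos 1)] at hx
    linarith
  have hslope : Real.log (A / x) ≤ 1 := by
    have h1 : A / x ≤ Real.exp 1 := by rw [div_le_iff₀ hx0]; linarith [mul_comm x (Real.exp 1)]
    calc Real.log (A / x) ≤ Real.log (Real.exp 1) := Real.log_le_log (by positivity) h1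
      _ = 1 := Real.log_exp 1
  nlinarith [htan, hslope, hxy]

lemma fB_eq_mullog {A : ℝ} (hA : 0 < A) {x : ℝ} (h0 : 0 ≤ x) :
    fBoundary A x = x * Real.log A - x * Real.log x := by
  rcases eq_or_lt_of_le h0 with h | h
  · rw [← h, fB_zero]; simp
  · rw [fB_of_ne (ne_of_gt h), Real.log_div (ne_of_gt hA) (ne_of_gt h)]; ring

lemma D_compact {A : ℝ} (hA : 0 < A) :
    IsCompact {p : ℝ × ℝ | 0 ≤ p.2 ∧ p.2 ≤ A ∧ 0 ≤ p.1 ∧ p.1 ≤ fBoundary A p.2} := by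
  have himg : {p : ℝ × ℝ | 0 ≤ p.2 ∧ p.2 ≤ A ∧ 0 ≤ p.1 ∧ p.1 ≤ fBoundary A p.2}
      = (fun q : ℝ × ℝ => (q.1 * (q.2 * Real.log A - q.2 * Real.log q.2), q.2)) ''
        (Set.Icc 0 1 ×ˢ Set.Icc 0 A) := by
    ext p
    simp only [Set.mem_setOf_eq, Set.mem_image, Set.mem_prod, Set.mem_Icc, Prod.exists]
    constructor
    · rintro ⟨h1, h2, h3, h4⟩
      rcases eq_or_lt_of_le (fB_nonneg hA h1 h2) with hf | hf
      · refine ⟨0, p.2, ⟨⟨le_refl 0, zero_le_one⟩, h1, h2⟩, ?_⟩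
        have hp1 : p.1 = 0 := le_antisymm (by rw [← hf] at h4; exact h4) h3
        have hpp : p = (p.1, p.2) := rfl
        rw [hpp]
        simp [hp1]
      · refine ⟨p.1 / fBoundary A p.2, p.2, ⟨⟨by positivity, ?_⟩, h1, h2⟩, ?_⟩
        · rw [div_le_one hf]; exact h4
        · rw [← fB_eq_mullog hA h1, div_mul_cancel₀ _ (ne_of_gt hf)]
    · rintro ⟨t, x, ⟨⟨ht0, ht1⟩, hx0, hxA⟩, hpe⟩
      rw [← hpe]
      have hg : x * Real.log A - x * Real.log x = fBoundary A x := (fB_eq_mullog hA hx0).symm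
      simp only [hg]
      have hfnn := fB_nonneg hA hx0 hxA
      refine ⟨hx0, hxA, by positivity, ?_⟩
      nlinarith
  rw [himg]
  apply (isCompact_Icc.prod isCompact_Icc).image
  apply Continuous.prodMk
  · exact continuous_fst.mul
      (((continuous_snd.mul continuous_const)).sub (Real.continuous_mul_log.comp continuous_snd))
  · exact continuous_snd

lemma D_convex {A : ℝ} (hA : 0 < A) :
    Convex ℝ {p : ℝ × ℝ | 0 ≤ p.2 ∧ p.2 ≤ A ∧ 0 ≤ p.1 ∧ p.1 ≤ fBoundary A p.2} := by
  rintro ⟨c1, x1⟩ ⟨h1a, h1b, h1c, h1d⟩ ⟨c2, x2⟩ ⟨h2a, h2b, h2c, h2d⟩ t s ht hs hts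
  simp only [Set.mem_setOf_eq, Prod.smul_mk, Prod.mk_add_mk, smul_eq_mul]
  refine ⟨by nlinarith, by nlinarith, by nlinarith, ?_⟩
  set z : ℝ := t * x1 + s * x2 with hz_def
  have hzdef : t * x1 + s * x2 = z := rfl
  have hz0 : 0 ≤ z := by nlinarith
  rcases eq_or_lt_of_le hz0 with hz | hz
  · -- z = 0
    have hx1 : t * x1 = 0 := by nlinarith
    have hx2 : s * x2 = 0 := by nlinarith
    have hc1 : t * c1 = 0 := by
      rcases mul_eq_zero.mp hx1 with h | h
      · rw [h, zero_mul]
      · have : c1 ≤ 0 := by rw [h, fB_zero] at h1d; exact h1d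
        have : c1 = 0 := le_antisymm this h1c
        rw [this, mul_zero]
    have hc2 : s * c2 = 0 := by
      rcases mul_eq_zero.mp hx2 with h | h
      · rw [h, zero_mul]
      · have : c2 ≤ 0 := by rw [h, fB_zero] at h2d; exact h2d
        have : c2 = 0 := le_antisymm this h2c
        rw [this, mul_zero]
    rw [hc1, hc2, ← hz, fB_zero]
    norm_num
  · set L : ℝ := Real.log (A / z) - 1 with hL_def
    have e1 : fBoundary A x1 ≤ fBoundary A z + L * (x1 - z) := fB_tangent_le hA hz h1a
    have e2 : fBoundary A x2 ≤ fBoundary A z + L * (x2 - z) := fB_tangent_le hA hz h2a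
    have e1' : t * fBoundary A x1 ≤ t * (fBoundary A z + L * (x1 - z)) :=
      mul_le_mul_of_nonneg_left e1 ht
    have e2' : s * fBoundary A x2 ≤ s * (fBoundary A z + L * (x2 - z)) :=
      mul_le_mul_of_nonneg_left e2 hs
    have hc1 : t * c1 ≤ t * fBoundary A x1 := mul_le_mul_of_nonneg_left h1d ht
    have hc2 : s * c2 ≤ s * fBoundary A x2 := mul_le_mul_of_nonneg_left h2d hs
    have hsum : t * (fBoundary A z + L * (x1 - z)) + s * (fBoundary A z + L * (x2 - z))
        = fBoundary A z := by
      linear_combination (fBoundary A z - L * z) * hts + L * hzdef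
    linarith

section Frontier
variable {A : ℝ}

lemma one_le_e : (1:ℝ) ≤ Real.exp 1 := by
  have := Real.add_one_le_exp 1; linarith

lemma peak_pos (hA : 0 < A) : 0 < A / Real.exp 1 := by positivity

lemma peak_le (hA : 0 < A) : A / Real.exp 1 ≤ A := div_le_self hA.le one_le_e

lemma fB_A (hA : 0 < A) : fBoundary A A = 0 := by
  rw [fB_of_ne (ne_of_gt hA), div_self (ne_of_gt hA), Real.log_one, mul_zero]

lemma curve_mem_D (hA : 0 < A) {x : ℝ} (h0 : 0 ≤ x) (hxA : x ≤ A) :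
    (fBoundary A x, x) ∈ {p : ℝ × ℝ | 0 ≤ p.2 ∧ p.2 ≤ A ∧ 0 ≤ p.1 ∧ p.1 ≤ fBoundary A p.2} :=
  ⟨h0, hxA, fB_nonneg hA h0 hxA, le_refl _⟩

lemma pareto_eq_curve (hA : 0 < A) :
    ParetoFrontier {p : ℝ × ℝ | 0 ≤ p.2 ∧ p.2 ≤ A ∧ 0 ≤ p.1 ∧ p.1 ≤ fBoundary A p.2}
      = {p : ℝ × ℝ | ∃ pi ∈ Set.Icc (A / Real.exp 1) A, p = (fBoundary A pi, pi)} := by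
  set D := {p : ℝ × ℝ | 0 ≤ p.2 ∧ p.2 ≤ A ∧ 0 ≤ p.1 ∧ p.1 ≤ fBoundary A p.2} with hD
  ext p
  constructor
  · rintro ⟨⟨h1, h2, h3, h4⟩, hnd⟩
    have hcf : p.1 = fBoundary A p.2 := by
      by_contra hne
      have hlt : p.1 < fBoundary A p.2 := lt_of_le_of_ne h4 hne
      exact hnd ⟨(fBoundary A p.2, p.2), curve_mem_D hA h1 h2, hlt.le, le_refl _, Or.inl hlt⟩
    have hge : A / Real.exp 1 ≤ p.2 := by
      by_contra hlt
      push_neg at hlt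
      refine hnd ⟨(A / Real.exp 1, A / Real.exp 1),
        by rw [hD]; exact ⟨(peak_pos hA).le, peak_le hA, (peak_pos hA).le,
          by rw [fB_at_peak hA]⟩, ?_, hlt.le, Or.inr hlt⟩
      rw [hcf]
      exact fB_le_peak hA h1
    refine ⟨p.2, ⟨hge, h2⟩, ?_⟩
    have hpp : p = (p.1, p.2) := rfl
    rw [hpp, hcf]
  · rintro ⟨x, ⟨hx1, hx2⟩, rfl⟩
    have hx0 : 0 < x := lt_of_lt_of_le (peak_pos hA) hx1
    refine ⟨curve_mem_D hA hx0.le hx2, ?_⟩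
    rintro ⟨⟨c', y⟩, hmem, hle1, hle2, hstrict⟩
    rw [hD] at hmem
    obtain ⟨k1, k2, k3, k4⟩ := hmem
    simp only at hle1 hle2 hstrict k4
    rcases eq_or_lt_of_le hle2 with heq | hlt
    · rw [← heq] at k4
      rcases hstrict with hs | hs
      · linarith
      · linarith
    · have := fB_strict_anti hA hx1 hlt k2
      linarith

lemma supported_eq_curve (hA : 0 < A) :
    SupportedFrontier {p : ℝ × ℝ | 0 ≤ p.2 ∧ p.2 ≤ A ∧ 0 ≤ p.1 ∧ p.1 ≤ fBoundary A p.2}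
      = {p : ℝ × ℝ | ∃ pi ∈ Set.Icc (A / Real.exp 1) A, p = (fBoundary A pi, pi)} := by
  set D := {p : ℝ × ℝ | 0 ≤ p.2 ∧ p.2 ≤ A ∧ 0 ≤ p.1 ∧ p.1 ≤ fBoundary A p.2} with hD
  ext p
  constructor
  · rintro ⟨⟨h1, h2, h3, h4⟩, k, ⟨hk0, hk1⟩, hmax⟩
    rcases eq_or_lt_of_le hk0 with hk | hk
    · -- k = 0 : profit maximizer
      have hmem : ((0:ℝ), A) ∈ D := by
        rw [hD]; exact ⟨hA.le, le_refl A, le_refl 0, fB_nonneg hA hA.le (le_refl A)⟩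
      have := hmax (0, A) hmem
      rw [← hk] at this
      simp only [zero_mul, one_mul, sub_zero, zero_add] at this
      have hp2 : p.2 = A := le_antisymm h2 this
      have hp1 : p.1 = 0 := by
        have := h4
        rw [hp2, fB_A hA] at this
        exact le_antisymm this h3
      refine ⟨A, ⟨peak_le hA, le_refl A⟩, ?_⟩
      have hpp : p = (p.1, p.2) := rfl
      rw [hpp, hp1, hp2, fB_A hA]
    · -- k > 0
      have hcf : p.1 = fBoundary A p.2 := by
        have := hmax (fBoundary A p.2, p.2) (curve_mem_D hA h1 h2)
        simp only at this
        have h5 : k * fBoundary A p.2 ≤ k * p.1 := by linarith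
        have := le_of_mul_le_mul_left h5 hk
        exact le_antisymm h4 this
      have hge : A / Real.exp 1 ≤ p.2 := by
        by_contra hlt
        push_neg at hlt
        have hmem : (A / Real.exp 1, A / Real.exp 1) ∈ D := by
          rw [hD]
          exact ⟨(peak_pos hA).le, peak_le hA, (peak_pos hA).le, by rw [fB_at_peak hA]⟩
        have hle := hmax (A / Real.exp 1, A / Real.exp 1) hmem
        simp only at hle
        have hfp : p.1 < A / Real.exp 1 := by
          rw [hcf]
          exact fB_lt_peak hA h1 (ne_of_lt hlt)
        nlinarith
      refine ⟨p.2, ⟨hge, h2⟩, ?_⟩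
      have hpp : p = (p.1, p.2) := rfl
      rw [hpp, hcf]
  · rintro ⟨x, ⟨hx1, hx2⟩, rfl⟩
    have hx0 : 0 < x := lt_of_lt_of_le (peak_pos hA) hx1
    refine ⟨curve_mem_D hA hx0.le hx2, ?_⟩
    set t : ℝ := Real.log (A / x) with ht_def
    have ht0 : 0 ≤ t := Real.log_nonneg ((one_le_div hx0).mpr hx2)
    have ht1 : t ≤ 1 := by
      have h1 : A / x ≤ Real.exp 1 := by
        rw [div_le_iff₀ hx0]
        rw [div_le_iff₀ (Real.exp_pos 1)] at hx1
        linarith [mul_comm x (Real.exp 1)]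
      calc t ≤ Real.log (Real.exp 1) := Real.log_le_log (by positivity) h1
        _ = 1 := Real.log_exp 1
    have h2t : 0 < 2 - t := by linarith
    set k : ℝ := 1 / (2 - t) with hk_def
    have hk0 : 0 < k := by positivity
    have hk1 : k ≤ 1 := by
      rw [hk_def, div_le_one h2t]; linarith
    have hkey : k * (t - 1) + (1 - k) = 0 := by
      have h : k * (2 - t) = 1 := by rw [hk_def]; field_simp
      linear_combination -h
    refine ⟨k, ⟨hk0.le, hk1⟩, ?_⟩
    rintro ⟨c, y⟩ hmem
    rw [hD] at hmem
    obtain ⟨g1, g2, g3, g4⟩ := hmem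
    simp only at g4 ⊢
    have e1 : fBoundary A y ≤ fBoundary A x + (t - 1) * (y - x) := by
      have := fB_tangent_le hA hx0 g1
      rw [← ht_def] at this
      exact this
    have c1 : k * c ≤ k * fBoundary A y := mul_le_mul_of_nonneg_left g4 hk0.le
    have c2 : k * fBoundary A y ≤ k * (fBoundary A x + (t - 1) * (y - x)) :=
      mul_le_mul_of_nonneg_left e1 hk0.le
    have c3 : k * (fBoundary A x + (t - 1) * (y - x)) + (1 - k) * y
        = k * fBoundary A x + (1 - k) * x := by
      linear_combination (y - x) * hkey
    linarith

end Frontier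

lemma mem_vppSet_of (Qbar M : ℝ) (hQbar : 0 < Qbar) (hM : M ∈ Set.Ico (0:ℝ) 1)
    {c x : ℝ} (h1 : 0 ≤ x) (h2 : x ≤ Qbar * (1 - M)) (h3 : 0 ≤ c)
    (h4 : c ≤ fBoundary (Qbar * (1 - M)) x) : (c, x) ∈ VppSet Qbar M := by
  have hM0 : 0 ≤ M := hM.1
  have hM1 : M < 1 := hM.2
  have h1M : 0 < 1 - M := by linarith
  rcases eq_or_lt_of_le h1 with hx | hx
  · -- x = 0
    have hc : c = 0 := le_antisymm (by rw [← hx, fB_zero] at h4; exact h4) h3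
    have hSd : ∀ v : ℝ, M < v → SG (Measure.dirac M) v = 0 := by
      intro v hv
      rw [SG, Measure.dirac_apply' _ measurableSet_Icc, Set.indicator_of_notMem]
      · simp
      · intro hmem
        exact absurd hmem.1 (not_le.mpr hv)
    have hprob : ProbOn01 (Measure.dirac M) := by
      refine ⟨inferInstance, ?_⟩
      rw [Measure.dirac_apply' _ measurableSet_Icc,
        Set.indicator_of_mem (show M ∈ Set.Icc (0:ℝ) 1 from ⟨hM0, hM1.le⟩)]
      rfl
    have hropt : M ∈ Rstar M (Measure.dirac M) := by
      refine ⟨⟨le_refl M, hM1.le⟩, ?_⟩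
      intro r' hr'
      rw [sub_self, zero_mul]
      rcases eq_or_lt_of_le hr'.1 with he | hlt
      · rw [← he, sub_self, zero_mul]
      · rw [hSd r' hlt, mul_zero]
    refine ⟨Measure.dirac M, hprob, M, hropt, ?_⟩
    have hCS : CSG Qbar (Measure.dirac M) M = 0 := by
      rw [CSG]
      have hint : ∫ v in M..1, SG (Measure.dirac M) v = 0 := by
        rw [intervalIntegral.integral_congr_ae (g := fun _ => (0:ℝ))]
        · simp
        · filter_upwards with v hv
          rw [Set.uIoc_of_le hM1.le] at hv
          exact hSd v hv.1
      rw [hint, mul_zero]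
    have hPi : PiG Qbar M (Measure.dirac M) M = 0 := by
      rw [PiG, sub_self, mul_zero, zero_mul]
    rw [hCS, hPi, hc, ← hx]
  · -- x > 0
    set p : ℝ := x / Qbar with hp_def
    have hp : 0 < p := by positivity
    set r : ℝ := M + (1 - M) * Real.exp (-(c / x)) with hr_def
    have hrM : r - M = (1 - M) * Real.exp (-(c / x)) := by rw [hr_def]; ring
    have hrMpos : 0 < r - M := by rw [hrM]; positivity
    have hr1 : r ≤ 1 := by
      have he1 : Real.exp (-(c / x)) ≤ 1 := by
        rw [Real.exp_le_one_iff]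
        have : 0 ≤ c / x := by positivity
        linarith
      have : (1 - M) * Real.exp (-(c / x)) ≤ 1 - M := by nlinarith
      rw [hr_def]; linarith
    have hAx : Qbar * (1 - M) / x = (1 - M) / p := by
      rw [hp_def]
      field_simp
    have hcx : c / x ≤ Real.log ((1 - M) / p) := by
      rw [← hAx, div_le_iff₀ hx]
      rw [fB_of_ne (ne_of_gt hx)] at h4
      linarith [mul_comm x (Real.log (Qbar * (1 - M) / x))]
    have hpr : p ≤ r - M := by
      have hlp : Real.log (p / (1 - M)) ≤ -(c / x) := by
        have hinv : p / (1 - M) = ((1 - M) / p)⁻¹ := by rw [inv_div]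
        rw [hinv, Real.log_inv]
        linarith
      have hexp : p / (1 - M) ≤ Real.exp (-(c / x)) := by
        calc p / (1 - M) = Real.exp (Real.log (p / (1 - M))) :=
              (Real.exp_log (by positivity)).symm
          _ ≤ Real.exp (-(c / x)) := Real.exp_le_exp.mpr hlp
      rw [hrM]
      rw [div_le_iff₀ h1M] at hexp
      linarith [mul_comm (Real.exp (-(c / x))) (1 - M)]
    obtain ⟨G, hprob, hropt, hSr, hCS⟩ := construct M p r hM hp hpr hr1
    refine ⟨G, hprob, r, hropt, ?_⟩
    have hlogr : Real.log ((1 - M) / (r - M)) = c / x := by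
      rw [hrM]
      have hq : (1 - M) / ((1 - M) * Real.exp (-(c / x))) = Real.exp (c / x) := by
        rw [Real.exp_neg]
        field_simp
      rw [hq, Real.log_exp]
    have hQp : Qbar * p = x := by rw [hp_def]; field_simp
    have hCSv : CSG Qbar G r = c := by
      rw [hCS Qbar, hlogr, ← mul_assoc, hQp]
      field_simp
    have hPiv : PiG Qbar M G r = x := by
      rw [PiG, hSr, mul_assoc, mul_comm (r - M) (p / (r - M)), div_mul_cancel₀ p (ne_of_gt hrMpos), hQp]
    rw [hCSv, hPiv]

/-- geometry of the posted-price benchmark, with `A = Q̄(1−M)`: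
(i) `V^{pp}` is the hypograph of `f` over `[0,A]`; (ii) `V^{pp}` is compact and convex;
(iii) its Pareto frontier coincides with its supported frontier and equals
`{(f(π),π) : π ∈ [A/e, A]}`. -/
theorem posted_price_geometry
    (Qbar M : ℝ) (hQbar : 0 < Qbar) (hM : M ∈ Set.Ico (0:ℝ) 1) :
    -- (i)
    VppSet Qbar M
      = {p : ℝ × ℝ | 0 ≤ p.2 ∧ p.2 ≤ Qbar * (1 - M) ∧
          0 ≤ p.1 ∧ p.1 ≤ fBoundary (Qbar * (1 - M)) p.2} ∧
    -- (ii)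
    (IsCompact (VppSet Qbar M) ∧ Convex ℝ (VppSet Qbar M)) ∧
    -- (iii)
    (ParetoFrontier (VppSet Qbar M) = SupportedFrontier (VppSet Qbar M) ∧
     ParetoFrontier (VppSet Qbar M)
       = {p : ℝ × ℝ | ∃ pi ∈ Set.Icc (Qbar * (1 - M) / Real.exp 1) (Qbar * (1 - M)),
            p = (fBoundary (Qbar * (1 - M)) pi, pi)}) := by
  have hA : 0 < Qbar * (1 - M) := by
    have h2 := hM.2
    nlinarith
  have hset : VppSet Qbar M
      = {p : ℝ × ℝ | 0 ≤ p.2 ∧ p.2 ≤ Qbar * (1 - M) ∧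
          0 ≤ p.1 ∧ p.1 ≤ fBoundary (Qbar * (1 - M)) p.2} := by
    ext p
    constructor
    · rintro ⟨G, hG, r, hr, rfl⟩
      exact vpp_mem_bounds Qbar M hQbar hM G hG r hr
    · rintro ⟨h1, h2, h3, h4⟩
      have hmem := mem_vppSet_of Qbar M hQbar hM h1 h2 h3 h4
      have hpp : p = (p.1, p.2) := rfl
      rw [hpp]
      exact hmem
  refine ⟨hset, ⟨?_, ?_⟩, ?_, ?_⟩
  · rw [hset]; exact D_compact hA
  · rw [hset]; exact D_convex hA
  · rw [hset, pareto_eq_curve hA, supported_eq_curve hA]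
  · rw [hset, pareto_eq_curve hA]

end PostedPrice
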